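/- Fix the polynomial ring S = k[x₀,…,xₙ, y₀,…,yₖ] with n ≥ k ≥ 0 and irrelevant ideal B = ⟨x₀,…,xₙ⟩ ∩ ⟨y₀,…,yₖ⟩. Let Δ be the bipyramid over the k-simplex on vertices v₀,…,vₖ with apexes w₀, w₁, lcm-labeled by ℓ(vᵢ) = yᵢ, ℓ(w₀) = x₀, ℓ(w₁) = x₁. Then for every monomial m ∈ B and every i ≥ 0, the reduced homology H̃ᵢ(Δ_m; k) vanishes, while H̃₀(Δ_{x₀x₁}; k) ≠ 0. -/

import Mathlib

/-- A (combinatorial) simplicial complex: a downward-closed family of finite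
subsets of the vertex type `V`. -/
def IsComplex {V : Type} (Δ : Finset V → Prop) : Prop :=
  ∀ σ τ : Finset V, τ ⊆ σ → Δ σ → Δ τ

/-- The simplicial boundary operator on formal `k`-linear combinations of finite
subsets of `V`, with signs determined by the linear order on `V`. -/
noncomputable def bdry (V : Type) [DecidableEq V] [LinearOrder V]
    (k : Type) [Field k] : (Finset V →₀ k) →ₗ[k] (Finset V →₀ k) :=
  Finsupp.lsum k fun σ => LinearMap.toSpanSingleton k _
    (∑ v ∈ σ, ((-1 : k) ^ ((σ.filter (fun u => u < v)).card)) • Finsupp.single (σ.erase v) (1 : k))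

/-- Vanishing of the reduced simplicial homology `H̃_{n-1}(Δ; k)`: chains in
chain degree `n` are supported on faces of cardinality `n` (so chain degree `n`
corresponds to homological degree `n - 1`, and the empty face sits in chain
degree `0`).  The homology vanishes iff every cycle is a boundary. -/
def HredVanish {V : Type} [DecidableEq V] [LinearOrder V]
    (Δ : Finset V → Prop) (k : Type) [Field k] (n : ℕ) : Prop :=
  ∀ x ∈ Finsupp.supported k k {σ : Finset V | Δ σ ∧ σ.card = n},
    bdry V k x = 0 →
      ∃ y ∈ Finsupp.supported k k {σ : Finset V | Δ σ ∧ σ.card = n + 1},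
        bdry V k y = x

/-- The cone (homotopy) operator with apex `a`. -/
noncomputable def cone (V : Type) [DecidableEq V] [LinearOrder V]
    (K : Type) [Field K] (a : V) : (Finset V →₀ K) →ₗ[K] (Finset V →₀ K) :=
  Finsupp.lsum K fun σ => LinearMap.toSpanSingleton K _
    (if a ∈ σ then 0 else
      ((-1 : K) ^ ((σ.filter (fun u => u < a)).card)) • Finsupp.single (insert a σ) (1 : K))

section ConeLemmas

variable {V : Type} [DecidableEq V] [LinearOrder V] {K : Type} [Field K]

lemma bdry_single (σ : Finset V) (c : K) :
    bdry V K (Finsupp.single σ c)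
      = c • ∑ v ∈ σ, ((-1 : K) ^ ((σ.filter (fun u => u < v)).card)) •
          Finsupp.single (σ.erase v) (1 : K) := by
  simp [bdry, Finsupp.lsum_single, LinearMap.toSpanSingleton_apply]

lemma cone_single (a : V) (σ : Finset V) (c : K) :
    cone V K a (Finsupp.single σ c)
      = c • (if a ∈ σ then 0 else
          ((-1 : K) ^ ((σ.filter (fun u => u < a)).card)) •
            Finsupp.single (insert a σ) (1 : K)) := by
  simp [cone, Finsupp.lsum_single, LinearMap.toSpanSingleton_apply]

lemma sign_cancel {a v : V} {σ : Finset V} (ha : a ∉ σ) (hv : v ∈ σ) :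
    (-1:K)^((σ.filter (fun u => u < a)).card) *
      (-1:K)^(((insert a σ).filter (fun u => u < v)).card)
    + (-1:K)^((σ.filter (fun u => u < v)).card) *
      (-1:K)^(((σ.erase v).filter (fun u => u < a)).card) = 0 := by
  have hav : a ≠ v := fun h => ha (h ▸ hv)
  rw [Finset.filter_insert, Finset.filter_erase]
  rcases lt_or_gt_of_ne hav with h | h
  · rw [if_pos h, Finset.card_insert_of_notMem (by simp [ha]),
      Finset.erase_eq_of_notMem
        (by simp only [Finset.mem_filter]; exact fun hh => absurd hh.2 (asymm h))]
    rw [pow_succ]; ring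
  · rw [if_neg (asymm h)]
    have hm : v ∈ σ.filter (fun u => u < a) := Finset.mem_filter.2 ⟨hv, h⟩
    obtain ⟨r, hr⟩ : ∃ r, (σ.filter (fun u => u < a)).card = r + 1 :=
      ⟨_, (Nat.succ_pred_eq_of_pos (Finset.card_pos.2 ⟨v, hm⟩)).symm⟩
    rw [Finset.card_erase_of_mem hm, hr]
    simp only [Nat.add_sub_cancel, pow_succ]; ring

lemma homotopy (a : V) (x : Finset V →₀ K) :
    bdry V K (cone V K a x) + cone V K a (bdry V K x) = x := by
  have key : ∀ σ : Finset V,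
      bdry V K (cone V K a (Finsupp.single σ (1:K)))
        + cone V K a (bdry V K (Finsupp.single σ (1:K))) = Finsupp.single σ (1:K) := by
    intro σ
    by_cases ha : a ∈ σ
    · rw [cone_single, if_pos ha, smul_zero, map_zero, zero_add, bdry_single,
        one_smul, map_sum]
      rw [Finset.sum_eq_single a
        (fun v hv hva => by
          rw [map_smul, cone_single, if_pos (Finset.mem_erase.2 ⟨Ne.symm hva, ha⟩),
            smul_zero, smul_zero])
        (fun h => absurd ha h)]
      rw [map_smul, cone_single, if_neg (Finset.notMem_erase a σ), one_smul,
        Finset.insert_erase ha, Finset.filter_erase, Finset.erase_eq_of_notMem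
          (by simp : a ∉ Finset.filter (fun u => u < a) σ), smul_smul,
        ← pow_add, ← two_mul, pow_mul]
      norm_num
    · have hfa : Finset.filter (fun u => u < a) (insert a σ)
          = Finset.filter (fun u => u < a) σ := by
        rw [Finset.filter_insert, if_neg (lt_irrefl a)]
      have hone : ((-1:K)^((σ.filter (fun u => u < a)).card)) *
          ((-1:K)^((σ.filter (fun u => u < a)).card)) = 1 := by
        rw [← pow_add, ← two_mul, pow_mul]; norm_num
      have hsum : ∀ v ∈ σ,
          ((-1:K)^((σ.filter (fun u => u < a)).card) •
            (((-1:K)^(((insert a σ).filter (fun u => u < v)).card)) •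
              Finsupp.single ((insert a σ).erase v) (1:K)))
          + cone V K a (((-1:K)^((σ.filter (fun u => u < v)).card)) •
              Finsupp.single (σ.erase v) (1:K)) = 0 := by
        intro v hv
        have hav : a ≠ v := fun h => ha (h ▸ hv)
        rw [map_smul, cone_single, if_neg (fun h => ha (Finset.mem_of_mem_erase h)),
          one_smul, Finset.erase_insert_of_ne hav, smul_smul, smul_smul,
          ← add_smul, sign_cancel ha hv, zero_smul]
      rw [cone_single, if_neg ha, one_smul, map_smul, bdry_single, one_smul,
        Finset.sum_insert ha, smul_add, Finset.smul_sum,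
        Finset.erase_insert ha, hfa, smul_smul, hone, one_smul,
        bdry_single, one_smul, map_sum, add_assoc, ← Finset.sum_add_distrib,
        Finset.sum_eq_zero hsum, add_zero]
  have hmap : (bdry V K).comp (cone V K a) + (cone V K a).comp (bdry V K)
      = LinearMap.id := by
    apply Finsupp.lhom_ext
    intro σ c
    have h1 : Finsupp.single σ c = c • Finsupp.single σ (1:K) := by
      rw [Finsupp.smul_single, smul_eq_mul, mul_one]
    simp only [LinearMap.add_apply, LinearMap.comp_apply, LinearMap.id_apply, h1,
      map_smul, ← smul_add, key σ]
  simpa using LinearMap.congr_fun hmap x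

lemma cone_supported (a : V) (s s' : Set (Finset V))
    (h : ∀ σ ∈ s, a ∉ σ → insert a σ ∈ s') {x : Finset V →₀ K}
    (hx : x ∈ Finsupp.supported K K s) :
    cone V K a x ∈ Finsupp.supported K K s' := by
  rw [Finsupp.supported_eq_span_single] at hx
  induction hx using Submodule.span_induction with
  | mem z hz =>
    obtain ⟨σ, hσ, rfl⟩ := hz
    rw [cone_single, one_smul]
    by_cases haσ : a ∈ σ
    · rw [if_pos haσ]; exact Submodule.zero_mem _
    · rw [if_neg haσ]
      exact Submodule.smul_mem _ _ (Finsupp.single_mem_supported K 1 (h σ hσ haσ))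
  | zero => rw [map_zero]; exact Submodule.zero_mem _
  | add y z _ _ hy hz => rw [map_add]; exact Submodule.add_mem _ hy hz
  | smul c y _ hy => rw [map_smul]; exact Submodule.smul_mem _ _ hy

end ConeLemmas

namespace Stmt8

/-- Vertices of the bipyramid over a `k`-simplex: the base vertices are
`0, …, k` and the two apexes are `k + 1` and `k + 2`. -/
def w₀ (k : ℕ) : Fin (k + 3) := ⟨k + 1, by omega⟩

def w₁ (k : ℕ) : Fin (k + 3) := ⟨k + 2, by omega⟩

/-- The labeling of the bipyramid in `S = K[x₀,…,xₙ,y₀,…,y_k]`, monomials being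
encoded by exponent vectors on `Fin (n+1) ⊕ Fin (k+1)` (`inl i ↦ xᵢ`,
`inr j ↦ yⱼ`): `ℓ(vⱼ) = yⱼ` for the base vertices, `ℓ(w₀) = x₀`, `ℓ(w₁) = x₁`. -/
def lab (n k : ℕ) (hn : 1 ≤ n) (a : Fin (k + 3)) : (Fin (n + 1) ⊕ Fin (k + 1)) → ℕ :=
  fun t =>
    if h : (a : ℕ) ≤ k then (if t = Sum.inr ⟨(a : ℕ), by omega⟩ then 1 else 0)
    else if (a : ℕ) = k + 1 then (if t = Sum.inl ⟨0, by omega⟩ then 1 else 0)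
    else (if t = Sum.inl ⟨1, by omega⟩ then 1 else 0)

/-- The subcomplex `Δ_m` of the labeled bipyramid: faces of the bipyramid all of
whose vertex labels divide the monomial `m`. -/
def Dm (n k : ℕ) (hn : 1 ≤ n) (m : (Fin (n + 1) ⊕ Fin (k + 1)) → ℕ)
    (σ : Finset (Fin (k + 3))) : Prop :=
  ¬ ({w₀ k, w₁ k} : Finset (Fin (k + 3))) ⊆ σ ∧ ∀ a ∈ σ, ∀ t, lab n k hn a t ≤ m t

/-- The monomial `x₀x₁`. -/
def x01 (n k : ℕ) (hn : 1 ≤ n) : (Fin (n + 1) ⊕ Fin (k + 1)) → ℕ := fun t =>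
  if t = Sum.inl ⟨0, by omega⟩ then 1 else if t = Sum.inl ⟨1, by omega⟩ then 1 else 0

/-- For `S = K[x₀,…,xₙ,y₀,…,y_k]` (`n ≥ k ≥ 0`, `n ≥ 1`) with irrelevant ideal
`B = ⟨x₀,…,xₙ⟩ ∩ ⟨y₀,…,y_k⟩`, and the bipyramid over a `k`-simplex lcm-labeled
by `ℓ(vⱼ) = yⱼ`, `ℓ(w₀) = x₀`, `ℓ(w₁) = x₁`: for every monomial `m ∈ B` all
reduced homology groups `H̃ᵢ(Δ_m; K)` (`i ≥ 0`, i.e. chain degree `≥ 1`)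
vanish, while `H̃₀(Δ_{x₀x₁}; K) ≠ 0`. -/
theorem bipyramid_labeling_virtual_not_free (K : Type) [Field K]
    (n k : ℕ) (hkn : k ≤ n) (hn : 1 ≤ n) :
    (∀ m : (Fin (n + 1) ⊕ Fin (k + 1)) → ℕ,
        (∃ i : Fin (n + 1), 1 ≤ m (Sum.inl i)) →
        (∃ j : Fin (k + 1), 1 ≤ m (Sum.inr j)) →
        ∀ d : ℕ, 1 ≤ d → HredVanish (Dm n k hn m) K d) ∧
      ¬ HredVanish (Dm n k hn (x01 n k hn)) K 1 := by
  have hne : w₀ k ≠ w₁ k := by simp [w₀, w₁, Fin.ext_iff]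
  constructor
  · -- vanishing part: Δ_m is a cone with apex v_j
    rintro m _ ⟨j, hj⟩ d _ x hx hbx
    have hlaba : ∀ t, lab n k hn ⟨(j : ℕ), by omega⟩ t ≤ m t := by
      intro t
      have hjk : ((⟨(j : ℕ), by omega⟩ : Fin (k+3)) : ℕ) ≤ k := by
        have := j.isLt; simpa using by omega
      rw [lab, dif_pos hjk]
      split_ifs with ht
      · have ht2 : t = Sum.inr j := by rw [ht]
        rw [ht2]; exact hj
      · exact Nat.zero_le _
    set a : Fin (k + 3) := ⟨(j : ℕ), by omega⟩ with ha_def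
    have hcone : ∀ σ ∈ {σ : Finset (Fin (k+3)) | Dm n k hn m σ ∧ σ.card = d},
        a ∉ σ → insert a σ ∈
          {σ : Finset (Fin (k+3)) | Dm n k hn m σ ∧ σ.card = d + 1} := by
      rintro σ ⟨⟨hw, hlab⟩, hcard⟩ haσ
      refine ⟨⟨?_, ?_⟩, by rw [Finset.card_insert_of_notMem haσ, hcard]⟩
      · intro hsub
        apply hw
        intro w hw'
        have h2 := hsub hw'
        rcases Finset.mem_insert.1 h2 with h3 | h3
        · exfalso
          have h5 : (w : ℕ) = k + 1 ∨ (w : ℕ) = k + 2 := by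
            rcases Finset.mem_insert.1 hw' with h | h
            · left; rw [h]; rfl
            · right; rw [Finset.mem_singleton.1 h]; rfl
          have h6 : (w : ℕ) = (j : ℕ) := by rw [h3]
          have := j.isLt
          omega
        · exact h3
      · intro b hb t
        rcases Finset.mem_insert.1 hb with h3 | hbσ
        · rw [h3]; exact hlaba t
        · exact hlab b hbσ t
    refine ⟨cone _ K a x, cone_supported a _ _ hcone hx, ?_⟩
    have h := homotopy a x
    rw [hbx, map_zero, add_zero] at h
    exact h
  · -- nonvanishing for x₀x₁
    intro hvan
    have hD0 : ({w₀ k} : Finset (Fin (k+3))) ∈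
        {σ : Finset (Fin (k+3)) | Dm n k hn (x01 n k hn) σ ∧ σ.card = 1} := by
      refine ⟨⟨?_, ?_⟩, Finset.card_singleton _⟩
      · intro hsub
        have := hsub (Finset.mem_insert_of_mem (Finset.mem_singleton_self _))
        rw [Finset.mem_singleton] at this
        exact hne this.symm
      · intro b hb t
        rw [Finset.mem_singleton] at hb
        subst hb
        rcases t with i | j <;>
          simp [lab, x01, w₀] <;> split_ifs <;> omega
    have hD1 : ({w₁ k} : Finset (Fin (k+3))) ∈
        {σ : Finset (Fin (k+3)) | Dm n k hn (x01 n k hn) σ ∧ σ.card = 1} := by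
      refine ⟨⟨?_, ?_⟩, Finset.card_singleton _⟩
      · intro hsub
        have := hsub (Finset.mem_insert_self _ _)
        rw [Finset.mem_singleton] at this
        exact hne this
      · intro b hb t
        rw [Finset.mem_singleton] at hb
        subst hb
        rcases t with i | j <;>
          simp [lab, x01, w₁] <;> split_ifs <;> omega
    set x : Finset (Fin (k+3)) →₀ K :=
      Finsupp.single {w₀ k} 1 - Finsupp.single {w₁ k} 1 with hx_def
    have hxmem : x ∈ Finsupp.supported K K
        {σ : Finset (Fin (k+3)) | Dm n k hn (x01 n k hn) σ ∧ σ.card = 1} :=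
      Submodule.sub_mem _ (Finsupp.single_mem_supported K 1 hD0)
        (Finsupp.single_mem_supported K 1 hD1)
    have hb1 : ∀ w : Fin (k+3),
        bdry _ K (Finsupp.single ({w} : Finset (Fin (k+3))) (1:K))
          = Finsupp.single ∅ 1 := by
      intro w
      rw [bdry_single, one_smul, Finset.sum_singleton, Finset.filter_singleton,
        if_neg (lt_irrefl w), Finset.erase_singleton]
      simp
    have hcycle : bdry _ K x = 0 := by
      rw [hx_def, map_sub, hb1, hb1, sub_self]
    obtain ⟨y, hy, hby⟩ := hvan x hxmem hcycle
    have hempty : {σ : Finset (Fin (k+3)) |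
        Dm n k hn (x01 n k hn) σ ∧ σ.card = 1 + 1} = ∅ := by
      rw [Set.eq_empty_iff_forall_notMem]
      rintro σ ⟨⟨hw, hlab⟩, hcard⟩
      have hsub : σ ⊆ {w₀ k, w₁ k} := by
        intro b hb
        by_cases hbk : (b : ℕ) ≤ k
        · exfalso
          have h2 := hlab b hb (Sum.inr ⟨(b : ℕ), by omega⟩)
          simp [lab, x01, hbk] at h2
        · have h3 : (b : ℕ) = k + 1 ∨ (b : ℕ) = k + 2 := by
            have := b.isLt; omega
          rcases h3 with h3 | h3
          · exact Finset.mem_insert.2 (Or.inl (Fin.ext h3))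
          · exact Finset.mem_insert.2 (Or.inr (Finset.mem_singleton.2 (Fin.ext h3)))
      have hcard2 : ({w₀ k, w₁ k} : Finset (Fin (k+3))).card ≤ σ.card := by
        rw [hcard, Finset.card_insert_of_notMem (by simp [hne]), Finset.card_singleton]
      exact hw ((Finset.eq_of_subset_of_card_le hsub hcard2) ▸ Finset.Subset.refl _)
    have hyzero : y = 0 := by
      rw [Finsupp.mem_supported, hempty, Set.subset_empty_iff,
        Finset.coe_eq_empty] at hy
      exact Finsupp.support_eq_empty.1 hy
    have hx0 : x = 0 := by rw [← hby, hyzero, map_zero]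
    have := DFunLike.congr_fun hx0 ({w₀ k} : Finset (Fin (k+3)))
    rw [hx_def] at this
    simp [Finsupp.single_apply, (Finset.singleton_injective.ne hne.symm)] at this

end Stmt8
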